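/- Let (Δ_k)_{k ≥ −1} be real-analytic functions on ℝ whose Taylor expansions at 0 have the form Δ_k(x) = Σ_{n≥3} Δ_{k,n} xⁿ, and which satisfy, for all k ≥ 1, the recurrence Δ_k(x) = (2 + 2·cos(x/2))·Δ_{k−1}(x/2) + Δ_{k−2}(x/4)·(4·cos(x/4) + Δ_{k−2}(x/4))·(2·cos(x/2) − 2 + Δ_{k−1}(x/2)). Fix k ≥ 0 and suppose 0 < δ ≤ 1 is such that |Δ_{k−1,n}| ≤ δ and |Δ_{k,n}| ≤ δ for every n ≥ 3. Then |Δ_{k+1,3}| ≤ 4δ/2³, |Δ_{k+1,4}| ≤ 4δ/2⁴, and |Δ_{k+1,n}| ≤ 9δ/2ⁿ for every n ≥ 5. -/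

import Mathlib

open scoped ContDiff
open Finset

/-- Taylor coefficient at 0. -/
noncomputable def tmTc (f : ℝ → ℝ) (n : ℕ) : ℝ := iteratedDeriv n f 0 / (n.factorial : ℝ)

theorem tm_iteratedDeriv_add {f g : ℝ → ℝ} (hf : ContDiff ℝ ∞ f) (hg : ContDiff ℝ ∞ g)
    (n : ℕ) (x : ℝ) :
    iteratedDeriv n (fun y => f y + g y) x = iteratedDeriv n f x + iteratedDeriv n g x := by
  have hf' : ContDiffOn ℝ n f Set.univ := (hf.of_le (by exact_mod_cast le_top)).contDiffOn
  have hg' : ContDiffOn ℝ n g Set.univ := (hg.of_le (by exact_mod_cast le_top)).contDiffOn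
  have := iteratedDerivWithin_add (Set.mem_univ x) uniqueDiffOn_univ (hf' x (Set.mem_univ x)) (hg' x (Set.mem_univ x))
  simpa [iteratedDerivWithin_univ, Pi.add_def] using this

open Finset in
theorem tm_leibniz {f g : ℝ → ℝ} (hf : ContDiff ℝ ∞ f) (hg : ContDiff ℝ ∞ g) (n : ℕ) (x : ℝ) :
    iteratedDeriv n (fun y => f y * g y) x =
      ∑ i ∈ range (n + 1),
        (n.choose i : ℝ) * (iteratedDeriv i f x * iteratedDeriv (n - i) g x) := by
  induction n generalizing f g x with
  | zero => simp
  | succ n ih =>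
    have hdf : ContDiff ℝ ∞ (deriv f) := (contDiff_infty_iff_deriv.mp hf).2
    have hdg : ContDiff ℝ ∞ (deriv g) := (contDiff_infty_iff_deriv.mp hg).2
    have hstep : deriv (fun y => f y * g y) =
        fun y => deriv f y * g y + f y * deriv g y := by
      funext y
      exact deriv_mul (hf.differentiable (by simp) y)
        (hg.differentiable (by simp) y)
    rw [iteratedDeriv_succ', hstep,
      tm_iteratedDeriv_add ((hdf.mul hg)) ((hf.mul hdg)) n x,
      ih hdf hg, ih hf hdg]
    have e1 : ∀ i, iteratedDeriv i (deriv f) x = iteratedDeriv (i+1) f x := by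
      intro i; rw [iteratedDeriv_succ']
    have e2 : ∀ i, iteratedDeriv i (deriv g) x = iteratedDeriv (i+1) g x := by
      intro i; rw [iteratedDeriv_succ']
    simp_rw [e1, e2]
    rw [Finset.sum_range_succ' (fun i => ((n+1).choose i : ℝ) *
      (iteratedDeriv i f x * iteratedDeriv (n + 1 - i) g x))]
    rw [Finset.sum_range_succ (fun i => (n.choose i : ℝ) *
      (iteratedDeriv (i+1) f x * iteratedDeriv (n - i) g x))]
    rw [Finset.sum_range_succ' (fun i => (n.choose i : ℝ) *
      (iteratedDeriv i f x * iteratedDeriv (n - i + 1) g x))]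
    rw [Finset.sum_range_succ (fun i => (((n+1)).choose (i+1) : ℝ) *
      (iteratedDeriv (i+1) f x * iteratedDeriv (n + 1 - (i+1)) g x))]
    have hsum : (∑ i ∈ range n, ((n.choose (i+1) : ℝ) *
        (iteratedDeriv (i+1) f x * iteratedDeriv (n - (i+1) + 1) g x)))
        + ∑ i ∈ range n, ((n.choose i : ℝ) *
        (iteratedDeriv (i+1) f x * iteratedDeriv (n - i) g x))
        = ∑ i ∈ range n, (((n+1).choose (i+1) : ℝ) *
        (iteratedDeriv (i+1) f x * iteratedDeriv (n + 1 - (i+1)) g x)) := by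
      rw [← Finset.sum_add_distrib]
      refine Finset.sum_congr rfl ?_
      intro i hi
      have hin : i < n := Finset.mem_range.mp hi
      have h1 : n - (i+1) + 1 = n - i := by omega
      have h2 : n + 1 - (i+1) = n - i := by omega
      rw [h1, h2, Nat.choose_succ_succ n i]
      push_cast
      ring
    simp only [Nat.sub_self, Nat.choose_self, Nat.choose_zero_right, Nat.cast_one,
      Nat.add_sub_cancel_left, Nat.sub_zero, Nat.add_sub_cancel]
    linear_combination hsum

theorem tm_Tc_mul_aux (n i : ℕ) (hi : i ≤ n) (F G : ℝ) :
    (n.choose i : ℝ) * (F * G) / (n.factorial : ℝ)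
      = (F / (i.factorial : ℝ)) * (G / ((n-i).factorial : ℝ)) := by
  have key : ((i.factorial : ℝ) * ((n-i).factorial : ℝ)) * (n.choose i : ℝ)
      = (n.factorial : ℝ) := by
    push_cast [← Nat.choose_mul_factorial_mul_factorial hi]
    ring
  have h1 : (i.factorial : ℝ) ≠ 0 := Nat.cast_ne_zero.mpr i.factorial_ne_zero
  have h2 : ((n-i).factorial : ℝ) ≠ 0 := Nat.cast_ne_zero.mpr (n-i).factorial_ne_zero
  have h3 : (n.factorial : ℝ) ≠ 0 := Nat.cast_ne_zero.mpr n.factorial_ne_zero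
  field_simp
  linear_combination F * G * key

theorem tm_Tc_mul {f g : ℝ → ℝ} (hf : ContDiff ℝ ∞ f) (hg : ContDiff ℝ ∞ g) (n : ℕ) :
    tmTc (fun y => f y * g y) n = ∑ i ∈ range (n+1), tmTc f i * tmTc g (n - i) := by
  unfold tmTc
  rw [tm_leibniz hf hg, Finset.sum_div]
  refine Finset.sum_congr rfl ?_
  intro i hi
  exact tm_Tc_mul_aux n i (Nat.lt_succ_iff.mp (Finset.mem_range.mp hi)) _ _

theorem tm_Tc_add {f g : ℝ → ℝ} (hf : ContDiff ℝ ∞ f) (hg : ContDiff ℝ ∞ g) (n : ℕ) :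
    tmTc (fun y => f y + g y) n = tmTc f n + tmTc g n := by
  unfold tmTc
  rw [tm_iteratedDeriv_add hf hg]
  ring

theorem tm_Tc_const_add (c : ℝ) {f : ℝ → ℝ} {n : ℕ} (hn : 0 < n) :
    tmTc (fun y => c + f y) n = tmTc f n := by
  unfold tmTc
  have := iteratedDeriv_const_add (f := f) (x := (0:ℝ)) hn c
  rw [this]

theorem tm_Tc_cmul (c : ℝ) {f : ℝ → ℝ} (hf : ContDiff ℝ ∞ f) (n : ℕ) :
    tmTc (fun y => c * f y) n = c * tmTc f n := by
  unfold tmTc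
  have hf' : ContDiffOn ℝ n f Set.univ := (hf.of_le (by exact_mod_cast le_top)).contDiffOn
  have := iteratedDerivWithin_const_mul (Set.mem_univ (0:ℝ)) uniqueDiffOn_univ c (hf' 0 (Set.mem_univ 0))
  simp only [iteratedDerivWithin_univ] at this
  rw [this]
  ring

theorem tm_Tc_scale {f : ℝ → ℝ} (hf : ContDiff ℝ ∞ f) (c : ℝ) (n : ℕ) :
    tmTc (fun x => f (c * x)) n = c ^ n * tmTc f n := by
  unfold tmTc
  have h := iteratedDeriv_comp_const_mul (f := f)
    (hf.of_le (by exact_mod_cast le_top : (n : WithTop ℕ∞) ≤ ∞)) c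
  rw [congrFun h 0, mul_zero]
  ring

theorem tm_iteratedDeriv_cos (n : ℕ) :
    iteratedDeriv n Real.cos = fun x => Real.cos (x + n * (Real.pi / 2)) := by
  induction n with
  | zero => simp
  | succ n ih =>
    rw [iteratedDeriv_succ, ih]
    funext x
    rw [show (fun x => Real.cos (x + n * (Real.pi / 2)))
        = Real.cos ∘ (fun x => x + n * (Real.pi/2)) from rfl]
    rw [deriv_comp _ Real.differentiable_cos.differentiableAt (by fun_prop)]
    simp [Real.deriv_cos]
    rw [← Real.cos_add_pi_div_two (x + n * (Real.pi/2))]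
    push_cast
    ring_nf

theorem tm_Tc_cos (n : ℕ) :
    tmTc Real.cos n = Real.cos (n * (Real.pi / 2)) / (n.factorial : ℝ) := by
  unfold tmTc
  rw [congrFun (tm_iteratedDeriv_cos n) 0, zero_add]

theorem tm_Tc_cos_bound (n : ℕ) : |tmTc Real.cos n| ≤ 1 / (n.factorial : ℝ) := by
  rw [tm_Tc_cos, abs_div]
  have h : (0:ℝ) < (n.factorial : ℝ) := by exact_mod_cast n.factorial_pos
  rw [abs_of_pos h]
  gcongr
  exact Real.abs_cos_le_one _


theorem tm_Tc_cos_one : tmTc Real.cos 1 = 0 := by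
  rw [tm_Tc_cos]
  simp [Real.cos_pi_div_two]

theorem tm_Tc_cos_zero : tmTc Real.cos 0 = 1 := by
  rw [tm_Tc_cos]
  simp

theorem tm_fact_ge (j : ℕ) : 2 * 3 ^ j ≤ (j + 2).factorial := by
  induction j with
  | zero => simp [Nat.factorial]
  | succ j ih =>
    have : (j + 3).factorial = (j + 3) * (j + 2).factorial := rfl
    calc 2 * 3 ^ (j+1) = 3 * (2 * 3 ^ j) := by ring
    _ ≤ 3 * (j + 2).factorial := by omega
    _ ≤ (j + 3) * (j + 2).factorial := Nat.mul_le_mul_right _ (by omega)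
    _ = (j + 2 + 1).factorial := rfl

theorem tm_geom (N : ℕ) : ∑ i ∈ range N, ((3:ℝ)⁻¹) ^ i ≤ 3 / 2 := by
  rw [geom_sum_eq (by norm_num)]
  have h : (0:ℝ) ≤ ((3:ℝ)⁻¹) ^ N := by positivity
  rw [div_le_iff_of_neg (by norm_num : ((3:ℝ)⁻¹ - 1) < 0)]
  linarith

/-- weight for the first product term -/
noncomputable def tmW (i : ℕ) : ℝ := if i = 0 then 4 else if i = 1 then 0 else 9 * (3⁻¹:ℝ) ^ i

theorem tm_wsum (N : ℕ) (hN : 2 ≤ N) : ∑ i ∈ range N, tmW i ≤ 11 / 2 := by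
  have hle : ∀ i ∈ range N, tmW i ≤ 9 * ((3:ℝ)⁻¹) ^ i
      + (if i = 0 then (-5:ℝ) else 0) + (if i = 1 then (-3:ℝ) else 0) := by
    intro i _
    unfold tmW
    rcases Nat.eq_zero_or_pos i with h0 | h0
    · subst h0; norm_num
    rcases Nat.lt_or_ge i 2 with h1 | h1
    · interval_cases i <;> norm_num
    · have : i ≠ 0 := by omega
      have : i ≠ 1 := by omega
      simp_all
  have := Finset.sum_le_sum hle
  refine this.trans ?_
  rw [Finset.sum_add_distrib, Finset.sum_add_distrib, ← Finset.mul_sum]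
  have h0 : (∑ i ∈ range N, if i = 0 then (-5:ℝ) else 0) = -5 := by
    rw [Finset.sum_ite_eq' (range N) 0 (fun _ => (-5:ℝ))]
    simp [Finset.mem_range]; omega
  have h1 : (∑ i ∈ range N, if i = 1 then (-3:ℝ) else 0) = -3 := by
    rw [Finset.sum_ite_eq' (range N) 1 (fun _ => (-3:ℝ))]
    simp [Finset.mem_range]; omega
  rw [h0, h1]
  have := tm_geom N
  nlinarith

/-- weight for the second product term -/
noncomputable def tmV (m : ℕ) : ℝ := if m ≤ 2 then 0 else ((m:ℝ) - 2) * (2⁻¹:ℝ) ^ m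

theorem tm_vsum (N : ℕ) : ∑ m ∈ range N, tmV m ≤ 1 / 2 := by
  rcases Nat.lt_or_ge N 3 with h | h
  · have : ∀ m ∈ range N, tmV m = 0 := by
      intro m hm
      have : m ≤ 2 := by have := Finset.mem_range.mp hm; omega
      simp [tmV, this]
    rw [Finset.sum_congr rfl this]
    simp
  · have key : ∀ M : ℕ, 3 ≤ M →
        ∑ m ∈ range M, tmV m ≤ 1 / 2 - (2 * (M:ℝ) - 2) * (2⁻¹:ℝ) ^ M := by
      intro M hM
      induction M, hM using Nat.le_induction with
      | base =>
        have : ∀ m ∈ range 3, tmV m = 0 := by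
          intro m hm
          have : m ≤ 2 := by have := Finset.mem_range.mp hm; omega
          simp [tmV, this]
        rw [Finset.sum_congr rfl this]
        norm_num
      | succ M hM ih =>
        rw [Finset.sum_range_succ]
        have hV : tmV M = ((M:ℝ) - 2) * (2⁻¹:ℝ) ^ M := by
          have : ¬ (M ≤ 2) := by omega
          simp [tmV, this]
        rw [hV]
        have : ((2:ℝ)⁻¹) ^ (M+1) = (2⁻¹:ℝ) ^ M * 2⁻¹ := pow_succ _ _
        rw [this]
        push_cast
        nlinarith [ih, pow_nonneg (by norm_num : (0:ℝ) ≤ 2⁻¹) M]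
    have := key N h
    have hpos : (0:ℝ) ≤ (2 * (N:ℝ) - 2) * (2⁻¹:ℝ) ^ N := by
      have : (3:ℝ) ≤ (N:ℝ) := by exact_mod_cast h
      have := pow_nonneg (by norm_num : (0:ℝ) ≤ (2⁻¹:ℝ)) N
      nlinarith
    linarith

theorem tm_isum (K : ℝ) (N : ℕ) (hN : 3 ≤ N) :
    ∑ i ∈ range N, (if i ≤ 2 then (0:ℝ) else K) = ((N:ℝ) - 3) * K := by
  induction N, hN using Nat.le_induction with
  | base => simp [Finset.sum_range_succ]
  | succ N hN ih =>
    rw [Finset.sum_range_succ, ih]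
    have : ¬ (N ≤ 2) := by omega
    simp only [this, if_false]
    push_cast
    ring

theorem tm_abs_two (c q γv av : ℝ) (hc : 0 ≤ c) (hq : 0 ≤ q) :
    |c * (q * γv) + q * av| ≤ c * q * |γv| + q * |av| := by
  calc |c*(q*γv) + q*av| ≤ |c*(q*γv)| + |q*av| := abs_add_le _ _
  _ = c*q*|γv| + q*|av| := by
      rw [abs_mul, abs_mul, abs_mul, abs_of_nonneg hc, abs_of_nonneg hq]; ring

/-- one step of coefficient control for the rescaled error
recurrence. Here `D j = Δ_{j-1}` (so `D 0 = Δ_{-1}`), and the `n`-th Taylor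
coefficient at `0` of `D j` is `iteratedDeriv n (D j) 0 / n!`. -/
theorem thueMorse_model_step (D : ℕ → ℝ → ℝ)
    (han : ∀ j : ℕ, ∀ x : ℝ, AnalyticAt ℝ (D j) x)
    (hvanish : ∀ j : ℕ, ∀ n : ℕ, n ≤ 2 → iteratedDeriv n (D j) 0 = 0)
    (hrec : ∀ j : ℕ, 2 ≤ j → ∀ x : ℝ,
      D j x = (2 + 2 * Real.cos (x / 2)) * D (j - 1) (x / 2) +
        D (j - 2) (x / 4) * (4 * Real.cos (x / 4) + D (j - 2) (x / 4)) *
          (2 * Real.cos (x / 2) - 2 + D (j - 1) (x / 2)))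
    (k : ℕ) (δ : ℝ) (hδ0 : 0 < δ) (hδ1 : δ ≤ 1)
    (hbdk : ∀ n : ℕ, 3 ≤ n →
      |iteratedDeriv n (D k) 0 / (n.factorial : ℝ)| ≤ δ)
    (hbdk1 : ∀ n : ℕ, 3 ≤ n →
      |iteratedDeriv n (D (k + 1)) 0 / (n.factorial : ℝ)| ≤ δ) :
    |iteratedDeriv 3 (D (k + 2)) 0 / ((Nat.factorial 3 : ℕ) : ℝ)| ≤ 4 * δ / 2 ^ 3 ∧
    |iteratedDeriv 4 (D (k + 2)) 0 / ((Nat.factorial 4 : ℕ) : ℝ)| ≤ 4 * δ / 2 ^ 4 ∧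
    ∀ n : ℕ, 5 ≤ n →
      |iteratedDeriv n (D (k + 2)) 0 / (n.factorial : ℝ)| ≤ 9 * δ / 2 ^ n := by
  -- smoothness
  have hsm : ∀ j, ContDiff ℝ ∞ (D j) := fun j =>
    contDiff_iff_contDiffAt.mpr fun x => (han j x).contDiffAt
  have hsA : ContDiff ℝ ∞ (D k) := hsm k
  have hsB : ContDiff ℝ ∞ (D (k+1)) := hsm (k+1)
  have hlin2 : ContDiff ℝ ∞ (fun x : ℝ => (2⁻¹:ℝ) * x) := contDiff_const.mul contDiff_id
  have hlin4 : ContDiff ℝ ∞ (fun x : ℝ => (4⁻¹:ℝ) * x) := contDiff_const.mul contDiff_id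
  have hcos2 : ContDiff ℝ ∞ (fun x : ℝ => Real.cos (2⁻¹ * x)) := Real.contDiff_cos.comp hlin2
  have hcos4 : ContDiff ℝ ∞ (fun x : ℝ => Real.cos (4⁻¹ * x)) := Real.contDiff_cos.comp hlin4
  have hB2 : ContDiff ℝ ∞ (fun x : ℝ => D (k+1) (2⁻¹ * x)) := hsB.comp hlin2
  have hA4 : ContDiff ℝ ∞ (fun x : ℝ => D k (4⁻¹ * x)) := hsA.comp hlin4
  have hsu : ContDiff ℝ ∞ (fun x : ℝ => (2:ℝ) + 2 * Real.cos (2⁻¹ * x)) :=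
    contDiff_const.add (contDiff_const.mul hcos2)
  have hsg : ContDiff ℝ ∞ (fun x : ℝ => (4:ℝ) * Real.cos (4⁻¹ * x) + D k (4⁻¹ * x)) :=
    (contDiff_const.mul hcos4).add hA4
  have hsP : ContDiff ℝ ∞
      (fun x : ℝ => D k (4⁻¹*x) * ((4:ℝ) * Real.cos (4⁻¹ * x) + D k (4⁻¹ * x))) := hA4.mul hsg
  have hsh : ContDiff ℝ ∞
      (fun x : ℝ => (-2:ℝ) + (2 * Real.cos (2⁻¹ * x) + D (k+1) (2⁻¹ * x))) :=
    contDiff_const.add ((contDiff_const.mul hcos2).add hB2)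
  -- the functional equation in canonical form
  have hfun : D (k+2) = fun x =>
      ((2:ℝ) + 2 * Real.cos (2⁻¹ * x)) * D (k+1) (2⁻¹ * x)
      + (D k (4⁻¹*x) * ((4:ℝ) * Real.cos (4⁻¹ * x) + D k (4⁻¹ * x)))
        * ((-2:ℝ) + (2 * Real.cos (2⁻¹ * x) + D (k+1) (2⁻¹ * x))) := by
    funext x
    have h := hrec (k+2) (by omega) x
    have e2 : x / 2 = 2⁻¹ * x := by ring
    have e4 : x / 4 = 4⁻¹ * x := by ring
    simp only [show k+2-1 = k+1 from rfl, show k+2-2 = k from rfl, e2, e4] at h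
    rw [h]; ring
  -- the coefficient recurrence
  have hcoeff : ∀ n, tmTc (D (k+2)) n =
      (∑ i ∈ range (n+1), tmTc (fun x : ℝ => (2:ℝ) + 2 * Real.cos (2⁻¹ * x)) i
        * tmTc (fun x : ℝ => D (k+1) (2⁻¹ * x)) (n - i))
      + (∑ m ∈ range (n+1),
          tmTc (fun x : ℝ => D k (4⁻¹*x) * ((4:ℝ)*Real.cos (4⁻¹*x) + D k (4⁻¹*x))) m
        * tmTc (fun x : ℝ => (-2:ℝ) + (2*Real.cos (2⁻¹*x) + D (k+1) (2⁻¹*x))) (n - m)) := by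
    intro n
    have e0 : tmTc (D (k+2)) n =
        tmTc (fun x : ℝ => ((2:ℝ) + 2 * Real.cos (2⁻¹ * x)) * D (k+1) (2⁻¹ * x)) n
        + tmTc (fun x : ℝ => (D k (4⁻¹*x) * ((4:ℝ) * Real.cos (4⁻¹ * x) + D k (4⁻¹ * x)))
            * ((-2:ℝ) + (2 * Real.cos (2⁻¹ * x) + D (k+1) (2⁻¹ * x)))) n := by
      rw [hfun]
      exact tm_Tc_add (hsu.mul hB2) (hsP.mul hsh) n
    have e1 : tmTc (fun x : ℝ => ((2:ℝ) + 2 * Real.cos (2⁻¹ * x)) * D (k+1) (2⁻¹ * x)) n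
        = ∑ i ∈ range (n+1), tmTc (fun x : ℝ => (2:ℝ) + 2 * Real.cos (2⁻¹ * x)) i
          * tmTc (fun x : ℝ => D (k+1) (2⁻¹ * x)) (n - i) := tm_Tc_mul hsu hB2 n
    have e2 : tmTc (fun x : ℝ => (D k (4⁻¹*x) * ((4:ℝ) * Real.cos (4⁻¹ * x) + D k (4⁻¹ * x)))
            * ((-2:ℝ) + (2 * Real.cos (2⁻¹ * x) + D (k+1) (2⁻¹ * x)))) n
        = ∑ m ∈ range (n+1),
          tmTc (fun x : ℝ => D k (4⁻¹*x) * ((4:ℝ)*Real.cos (4⁻¹*x) + D k (4⁻¹*x))) m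
        * tmTc (fun x : ℝ => (-2:ℝ) + (2*Real.cos (2⁻¹*x) + D (k+1) (2⁻¹*x))) (n - m) :=
      tm_Tc_mul hsP hsh n
    rw [e0, e1, e2]
  -- vanishing and boundedness of the coefficients of D k and D (k+1)
  have ha0 : ∀ m ≤ 2, tmTc (D k) m = 0 := by
    intro m hm; unfold tmTc; rw [hvanish k m hm, zero_div]
  have hb0 : ∀ m ≤ 2, tmTc (D (k+1)) m = 0 := by
    intro m hm; unfold tmTc; rw [hvanish (k+1) m hm, zero_div]
  have haδ : ∀ m, |tmTc (D k) m| ≤ δ := by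
    intro m
    rcases le_or_gt m 2 with hm | hm
    · rw [ha0 m hm]; simpa using hδ0.le
    · exact hbdk m (by omega)
  have hbδ : ∀ m, |tmTc (D (k+1)) m| ≤ δ := by
    intro m
    rcases le_or_gt m 2 with hm | hm
    · rw [hb0 m hm]; simpa using hδ0.le
    · exact hbdk1 m (by omega)
  -- scaled coefficients
  have hvB : ∀ m, tmTc (fun x : ℝ => D (k+1) (2⁻¹ * x)) m
      = (2⁻¹:ℝ)^m * tmTc (D (k+1)) m := fun m => tm_Tc_scale hsB 2⁻¹ m
  have hfa : ∀ m, tmTc (fun x : ℝ => D k (4⁻¹ * x)) m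
      = (4⁻¹:ℝ)^m * tmTc (D k) m := fun m => tm_Tc_scale hsA 4⁻¹ m
  have hcosc2 : ∀ m, tmTc (fun x : ℝ => Real.cos (2⁻¹ * x)) m
      = (2⁻¹:ℝ)^m * tmTc Real.cos m := fun m => tm_Tc_scale Real.contDiff_cos 2⁻¹ m
  have hcosc4 : ∀ m, tmTc (fun x : ℝ => Real.cos (4⁻¹ * x)) m
      = (4⁻¹:ℝ)^m * tmTc Real.cos m := fun m => tm_Tc_scale Real.contDiff_cos 4⁻¹ m
  -- coefficients of the four building blocks
  have hU0 : tmTc (fun x : ℝ => (2:ℝ) + 2 * Real.cos (2⁻¹ * x)) 0 = 4 := by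
    unfold tmTc
    rw [iteratedDeriv_zero]
    norm_num
  have hUm : ∀ m, 1 ≤ m → tmTc (fun x : ℝ => (2:ℝ) + 2 * Real.cos (2⁻¹ * x)) m
      = 2 * ((2⁻¹:ℝ)^m * tmTc Real.cos m) := by
    intro m hm
    have h1 : tmTc (fun x : ℝ => (2:ℝ) + 2 * Real.cos (2⁻¹ * x)) m
        = tmTc (fun x : ℝ => (2:ℝ) * Real.cos (2⁻¹ * x)) m := tm_Tc_const_add 2 hm
    have h2 : tmTc (fun x : ℝ => (2:ℝ) * Real.cos (2⁻¹ * x)) m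
        = 2 * tmTc (fun x : ℝ => Real.cos (2⁻¹ * x)) m := tm_Tc_cmul 2 hcos2 m
    rw [h1, h2, hcosc2 m]
  have hU1 : tmTc (fun x : ℝ => (2:ℝ) + 2 * Real.cos (2⁻¹ * x)) 1 = 0 := by
    rw [hUm 1 le_rfl, tm_Tc_cos_one]; ring
  have hGm : ∀ m, tmTc (fun x : ℝ => (4:ℝ)*Real.cos (4⁻¹*x) + D k (4⁻¹*x)) m
      = 4 * ((4⁻¹:ℝ)^m * tmTc Real.cos m) + (4⁻¹:ℝ)^m * tmTc (D k) m := by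
    intro m
    have h1 : tmTc (fun x : ℝ => (4:ℝ)*Real.cos (4⁻¹*x) + D k (4⁻¹*x)) m
        = tmTc (fun x : ℝ => (4:ℝ)*Real.cos (4⁻¹*x)) m
          + tmTc (fun x : ℝ => D k (4⁻¹*x)) m := tm_Tc_add (contDiff_const.mul hcos4) hA4 m
    have h2 : tmTc (fun x : ℝ => (4:ℝ)*Real.cos (4⁻¹*x)) m
        = 4 * tmTc (fun x : ℝ => Real.cos (4⁻¹*x)) m := tm_Tc_cmul 4 hcos4 m
    rw [h1, h2, hcosc4 m, hfa m]
  have hHm : ∀ m, 1 ≤ m →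
      tmTc (fun x : ℝ => (-2:ℝ) + (2*Real.cos (2⁻¹*x) + D (k+1) (2⁻¹*x))) m
      = 2 * ((2⁻¹:ℝ)^m * tmTc Real.cos m) + (2⁻¹:ℝ)^m * tmTc (D (k+1)) m := by
    intro m hm
    have h1 : tmTc (fun x : ℝ => (-2:ℝ) + (2*Real.cos (2⁻¹*x) + D (k+1) (2⁻¹*x))) m
        = tmTc (fun x : ℝ => (2:ℝ)*Real.cos (2⁻¹*x) + D (k+1) (2⁻¹*x)) m :=
      tm_Tc_const_add (-2) hm
    have h2 : tmTc (fun x : ℝ => (2:ℝ)*Real.cos (2⁻¹*x) + D (k+1) (2⁻¹*x)) m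
        = tmTc (fun x : ℝ => (2:ℝ)*Real.cos (2⁻¹*x)) m
          + tmTc (fun x : ℝ => D (k+1) (2⁻¹*x)) m :=
      tm_Tc_add (contDiff_const.mul hcos2) hB2 m
    have h3 : tmTc (fun x : ℝ => (2:ℝ)*Real.cos (2⁻¹*x)) m
        = 2 * tmTc (fun x : ℝ => Real.cos (2⁻¹*x)) m := tm_Tc_cmul 2 hcos2 m
    rw [h1, h2, h3, hcosc2 m, hvB m]
  have hH0 : tmTc (fun x : ℝ => (-2:ℝ) + (2*Real.cos (2⁻¹*x) + D (k+1) (2⁻¹*x))) 0 = 0 := by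
    have hB00 : D (k+1) 0 = 0 := by
      have := hvanish (k+1) 0 (by norm_num)
      rwa [iteratedDeriv_zero] at this
    unfold tmTc
    rw [iteratedDeriv_zero]
    simp [hB00]
  have hH1 : tmTc (fun x : ℝ => (-2:ℝ) + (2*Real.cos (2⁻¹*x) + D (k+1) (2⁻¹*x))) 1 = 0 := by
    rw [hHm 1 le_rfl, tm_Tc_cos_one, hb0 1 (by norm_num)]; ring
  -- bounds for the blocks
  have hvB_bd : ∀ m, |tmTc (fun x : ℝ => D (k+1) (2⁻¹ * x)) m| ≤ δ * (2⁻¹:ℝ)^m := by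
    intro m
    rw [hvB m, abs_mul, abs_pow]
    have h1 : |(2⁻¹:ℝ)| = 2⁻¹ := by norm_num
    rw [h1, mul_comm]
    have := hbδ m
    have hq : (0:ℝ) ≤ (2⁻¹:ℝ)^m := by positivity
    exact mul_le_mul_of_nonneg_right this hq
  have hvB0 : ∀ m ≤ 2, tmTc (fun x : ℝ => D (k+1) (2⁻¹ * x)) m = 0 := by
    intro m hm; rw [hvB m, hb0 m hm, mul_zero]
  have hfa_bd : ∀ m, |tmTc (fun x : ℝ => D k (4⁻¹ * x)) m| ≤ δ * (4⁻¹:ℝ)^m := by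
    intro m
    rw [hfa m, abs_mul, abs_pow]
    have h1 : |(4⁻¹:ℝ)| = 4⁻¹ := by norm_num
    rw [h1, mul_comm]
    exact mul_le_mul_of_nonneg_right (haδ m) (by positivity)
  have hfa0 : ∀ m ≤ 2, tmTc (fun x : ℝ => D k (4⁻¹ * x)) m = 0 := by
    intro m hm; rw [hfa m, ha0 m hm, mul_zero]
  -- |u_i| ≤ 9 (1/3)^i (1/2)^i  for i ≥ 2
  have hU_bd : ∀ i, 2 ≤ i → |tmTc (fun x : ℝ => (2:ℝ) + 2 * Real.cos (2⁻¹ * x)) i|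
      ≤ 9 * (3⁻¹:ℝ)^i * (2⁻¹:ℝ)^i := by
    intro i hi
    obtain ⟨j, rfl⟩ : ∃ j, i = j + 2 := ⟨i - 2, by omega⟩
    rw [hUm (j+2) (by omega)]
    have hγ : |tmTc Real.cos (j+2)| ≤ 1/((j+2).factorial : ℝ) := tm_Tc_cos_bound _
    have hF : (2:ℝ) * 3^j ≤ ((j+2).factorial : ℝ) := by exact_mod_cast tm_fact_ge j
    have hFp : (0:ℝ) < ((j+2).factorial : ℝ) := by exact_mod_cast Nat.factorial_pos _
    have h3p : (0:ℝ) < (3:ℝ)^j := by positivity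
    have key : 2 * |tmTc Real.cos (j+2)| ≤ (3⁻¹:ℝ)^j := by
      have e : (3⁻¹:ℝ)^j = 1/(3:ℝ)^j := by rw [inv_pow, one_div]
      rw [e]
      calc 2 * |tmTc Real.cos (j+2)| ≤ 2 * (1/((j+2).factorial : ℝ)) := by linarith
      _ = 2 / ((j+2).factorial : ℝ) := by ring
      _ ≤ 1/(3:ℝ)^j := by
          rw [div_le_div_iff₀ hFp h3p]
          linarith
    have habs : |2 * ((2⁻¹:ℝ)^(j+2) * tmTc Real.cos (j+2))|
        = (2⁻¹:ℝ)^(j+2) * (2 * |tmTc Real.cos (j+2)|) := by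
      rw [abs_mul, abs_mul, abs_pow, show |(2⁻¹:ℝ)| = 2⁻¹ by norm_num,
        show |(2:ℝ)| = 2 by norm_num]
      ring
    rw [habs]
    have h9 : (9:ℝ) * (3⁻¹:ℝ)^(j+2) = (3⁻¹:ℝ)^j := by
      rw [pow_add]
      norm_num
      ring
    have hq : (0:ℝ) ≤ (2⁻¹:ℝ)^(j+2) := by positivity
    calc (2⁻¹:ℝ)^(j+2) * (2 * |tmTc Real.cos (j+2)|)
        ≤ (2⁻¹:ℝ)^(j+2) * (3⁻¹:ℝ)^j := mul_le_mul_of_nonneg_left key hq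
    _ = 9 * (3⁻¹:ℝ)^(j+2) * (2⁻¹:ℝ)^(j+2) := by rw [h9]; ring
  -- |g_m| ≤ 4 (1/4)^m
  have hG_bd : ∀ m, |tmTc (fun x : ℝ => (4:ℝ)*Real.cos (4⁻¹*x) + D k (4⁻¹*x)) m|
      ≤ 4 * (4⁻¹:ℝ)^m := by
    intro m
    rw [hGm m]
    have hq : (0:ℝ) ≤ (4⁻¹:ℝ)^m := by positivity
    have habs := tm_abs_two 4 ((4⁻¹:ℝ)^m) (tmTc Real.cos m) (tmTc (D k) m)
      (by norm_num) hq
    refine habs.trans ?_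
    have hγ : |tmTc Real.cos m| ≤ 1/(m.factorial:ℝ) := tm_Tc_cos_bound m
    have hFp : (0:ℝ) < (m.factorial : ℝ) := by exact_mod_cast Nat.factorial_pos m
    rcases le_or_gt m 2 with hm | hm
    · rw [ha0 m hm, abs_zero, mul_zero, add_zero]
      have hγ1 : |tmTc Real.cos m| ≤ 1 := by
        refine hγ.trans ?_
        rw [div_le_one hFp]
        exact_mod_cast m.factorial_pos
      calc 4 * (4⁻¹:ℝ)^m * |tmTc Real.cos m| ≤ 4 * (4⁻¹:ℝ)^m * 1 :=
        mul_le_mul_of_nonneg_left hγ1 (by positivity)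
      _ = 4 * (4⁻¹:ℝ)^m := by ring
    · have h6 : (6:ℝ) ≤ (m.factorial : ℝ) := by
        exact_mod_cast Nat.factorial_le (show 3 ≤ m by omega)
      have hγ6 : |tmTc Real.cos m| ≤ 1/6 := by
        refine hγ.trans ?_
        rw [div_le_div_iff₀ hFp (by norm_num)]
        linarith
      have t1 : 4 * (4⁻¹:ℝ)^m * |tmTc Real.cos m| ≤ 4 * (4⁻¹:ℝ)^m * (1/6) :=
        mul_le_mul_of_nonneg_left hγ6 (by positivity)
      have t2 : (4⁻¹:ℝ)^m * |tmTc (D k) m| ≤ (4⁻¹:ℝ)^m * 1 :=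
        mul_le_mul_of_nonneg_left ((haδ m).trans hδ1) hq
      nlinarith [hq]
  -- |h_j| ≤ 4/3 (1/2)^j
  have hH_bd : ∀ j, |tmTc (fun x : ℝ => (-2:ℝ) + (2*Real.cos (2⁻¹*x) + D (k+1) (2⁻¹*x))) j|
      ≤ 4/3 * (2⁻¹:ℝ)^j := by
    intro j
    rcases Nat.eq_zero_or_pos j with h0 | h0
    · subst h0; rw [hH0]; norm_num
    rw [hHm j h0]
    have hq : (0:ℝ) ≤ (2⁻¹:ℝ)^j := by positivity
    have habs := tm_abs_two 2 ((2⁻¹:ℝ)^j) (tmTc Real.cos j) (tmTc (D (k+1)) j)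
      (by norm_num) hq
    refine habs.trans ?_
    have hγ : |tmTc Real.cos j| ≤ 1/(j.factorial:ℝ) := tm_Tc_cos_bound j
    have hFp : (0:ℝ) < (j.factorial : ℝ) := by exact_mod_cast Nat.factorial_pos j
    rcases le_or_gt j 2 with hj | hj
    · -- j = 1 or 2 : coefficient of D (k+1) vanishes, |γ| ≤ 1/2 when j ≥ 2, γ_1 = 0
      rw [hb0 j hj, abs_zero, mul_zero, add_zero]
      interval_cases j
      · rw [tm_Tc_cos_one, abs_zero, mul_zero]
        positivity
      · have hγ2 : |tmTc Real.cos 2| ≤ 1/2 := by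
          have := tm_Tc_cos_bound 2
          norm_num [Nat.factorial] at this
          linarith
        calc 2 * (2⁻¹:ℝ)^2 * |tmTc Real.cos 2| ≤ 2 * (2⁻¹:ℝ)^2 * (1/2) :=
          mul_le_mul_of_nonneg_left hγ2 (by positivity)
        _ ≤ 4/3 * (2⁻¹:ℝ)^2 := by norm_num
    · have h6 : (6:ℝ) ≤ (j.factorial : ℝ) := by
        exact_mod_cast Nat.factorial_le (show 3 ≤ j by omega)
      have hγ6 : |tmTc Real.cos j| ≤ 1/6 := by
        refine hγ.trans ?_
        rw [div_le_div_iff₀ hFp (by norm_num)]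
        linarith
      have t1 : 2 * (2⁻¹:ℝ)^j * |tmTc Real.cos j| ≤ 2 * (2⁻¹:ℝ)^j * (1/6) :=
        mul_le_mul_of_nonneg_left hγ6 (by positivity)
      have t2 : (2⁻¹:ℝ)^j * |tmTc (D (k+1)) j| ≤ (2⁻¹:ℝ)^j * 1 :=
        mul_le_mul_of_nonneg_left ((hbδ j).trans hδ1) hq
      nlinarith [hq]
  -- coefficients of P = fA * g
  have hPm : ∀ m, tmTc (fun x : ℝ => D k (4⁻¹*x) * ((4:ℝ)*Real.cos (4⁻¹*x) + D k (4⁻¹*x))) m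
      = ∑ i ∈ range (m+1), tmTc (fun x : ℝ => D k (4⁻¹*x)) i
        * tmTc (fun x : ℝ => (4:ℝ)*Real.cos (4⁻¹*x) + D k (4⁻¹*x)) (m - i) :=
    fun m => tm_Tc_mul hA4 hsg m
  have hP0 : ∀ m ≤ 2,
      tmTc (fun x : ℝ => D k (4⁻¹*x) * ((4:ℝ)*Real.cos (4⁻¹*x) + D k (4⁻¹*x))) m = 0 := by
    intro m hm
    rw [hPm m]
    refine Finset.sum_eq_zero ?_
    intro i hi
    have : i ≤ 2 := by have := Finset.mem_range.mp hi; omega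
    rw [hfa0 i this, zero_mul]
  have hP_bd : ∀ m, 3 ≤ m →
      |tmTc (fun x : ℝ => D k (4⁻¹*x) * ((4:ℝ)*Real.cos (4⁻¹*x) + D k (4⁻¹*x))) m|
      ≤ ((m:ℝ) - 2) * (4 * δ * (4⁻¹:ℝ)^m) := by
    intro m hm
    rw [hPm m]
    calc |∑ i ∈ range (m+1), tmTc (fun x : ℝ => D k (4⁻¹*x)) i
          * tmTc (fun x : ℝ => (4:ℝ)*Real.cos (4⁻¹*x) + D k (4⁻¹*x)) (m - i)|
        ≤ ∑ i ∈ range (m+1), |tmTc (fun x : ℝ => D k (4⁻¹*x)) i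
          * tmTc (fun x : ℝ => (4:ℝ)*Real.cos (4⁻¹*x) + D k (4⁻¹*x)) (m - i)| :=
          Finset.abs_sum_le_sum_abs _ _
    _ ≤ ∑ i ∈ range (m+1), (if i ≤ 2 then (0:ℝ) else 4 * δ * (4⁻¹:ℝ)^m) := by
        refine Finset.sum_le_sum ?_
        intro i hi
        have him : i ≤ m := by have := Finset.mem_range.mp hi; omega
        rcases le_or_gt i 2 with h2 | h2
        · rw [hfa0 i h2, zero_mul, abs_zero]
          simp [h2]
        · have h2' : ¬ (i ≤ 2) := by omega
          simp only [h2', if_false]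
          rw [abs_mul]
          have t1 := hfa_bd i
          have t2 := hG_bd (m - i)
          have hnn1 : (0:ℝ) ≤ |tmTc (fun x : ℝ => D k (4⁻¹*x)) i| := abs_nonneg _
          have hnn2 : (0:ℝ) ≤ 4 * (4⁻¹:ℝ)^(m-i) := by positivity
          calc |tmTc (fun x : ℝ => D k (4⁻¹*x)) i|
              * |tmTc (fun x : ℝ => (4:ℝ)*Real.cos (4⁻¹*x) + D k (4⁻¹*x)) (m - i)|
              ≤ (δ * (4⁻¹:ℝ)^i) * (4 * (4⁻¹:ℝ)^(m-i)) := by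
                exact mul_le_mul t1 t2 (abs_nonneg _) (by positivity)
          _ = 4 * δ * ((4⁻¹:ℝ)^i * (4⁻¹:ℝ)^(m-i)) := by ring
          _ = 4 * δ * (4⁻¹:ℝ)^m := by rw [← pow_add, Nat.add_sub_cancel' him]
    _ = (((m+1:ℕ):ℝ) - 3) * (4 * δ * (4⁻¹:ℝ)^m) := tm_isum _ (m+1) (by omega)
    _ = ((m:ℝ) - 2) * (4 * δ * (4⁻¹:ℝ)^m) := by push_cast; ring
  refine ⟨?_, ?_, ?_⟩
  · -- n = 3
    show |tmTc (D (k+2)) 3| ≤ 4 * δ / 2 ^ 3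
    have h3 := hcoeff 3
    simp only [Finset.sum_range_succ, Finset.sum_range_zero, zero_add, Nat.sub_zero,
      show (3:ℕ) - 1 = 2 from rfl, show (3:ℕ) - 2 = 1 from rfl, Nat.sub_self] at h3
    rw [hU0, hvB0 2 (by norm_num), hvB0 1 (by norm_num), hvB0 0 (by norm_num),
      hP0 0 (by norm_num), hP0 1 (by norm_num), hP0 2 (by norm_num), hH0, hvB 3] at h3
    simp only [mul_zero, zero_mul, add_zero, zero_add] at h3
    rw [h3]
    have hb3 : |tmTc (D (k+1)) 3| ≤ δ := hbdk1 3 le_rfl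
    calc |4 * ((2⁻¹:ℝ)^3 * tmTc (D (k+1)) 3)| = (1/2) * |tmTc (D (k+1)) 3| := by
          rw [abs_mul, abs_mul, abs_pow, show |(2⁻¹:ℝ)| = 2⁻¹ by norm_num,
            show |(4:ℝ)| = 4 by norm_num]
          norm_num
          ring
    _ ≤ (1/2) * δ := by linarith
    _ = 4 * δ / 2 ^ 3 := by ring
  · -- n = 4
    show |tmTc (D (k+2)) 4| ≤ 4 * δ / 2 ^ 4
    have h4 := hcoeff 4
    simp only [Finset.sum_range_succ, Finset.sum_range_zero, zero_add, Nat.sub_zero,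
      show (4:ℕ) - 1 = 3 from rfl, show (4:ℕ) - 2 = 2 from rfl,
      show (4:ℕ) - 3 = 1 from rfl, Nat.sub_self] at h4
    rw [hU0, hU1, hvB0 2 (by norm_num), hvB0 1 (by norm_num), hvB0 0 (by norm_num),
      hP0 0 (by norm_num), hP0 1 (by norm_num), hP0 2 (by norm_num), hH0, hH1,
      hvB 4] at h4
    simp only [mul_zero, zero_mul, add_zero, zero_add] at h4
    rw [h4]
    have hb4 : |tmTc (D (k+1)) 4| ≤ δ := hbdk1 4 (by norm_num)
    calc |4 * ((2⁻¹:ℝ)^4 * tmTc (D (k+1)) 4)| = (1/4) * |tmTc (D (k+1)) 4| := by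
          rw [abs_mul, abs_mul, abs_pow, show |(2⁻¹:ℝ)| = 2⁻¹ by norm_num,
            show |(4:ℝ)| = 4 by norm_num]
          norm_num
          ring
    _ ≤ (1/4) * δ := by linarith
    _ = 4 * δ / 2 ^ 4 := by ring
  · -- n ≥ 5
    intro n hn
    show |tmTc (D (k+2)) n| ≤ 9 * δ / 2 ^ n
    rw [hcoeff n]
    refine (abs_add_le _ _).trans ?_
    have hT1 : |∑ i ∈ range (n+1), tmTc (fun x : ℝ => (2:ℝ) + 2 * Real.cos (2⁻¹ * x)) i
        * tmTc (fun x : ℝ => D (k+1) (2⁻¹ * x)) (n - i)| ≤ 11/2 * (δ * (2⁻¹:ℝ)^n) := by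
      calc |∑ i ∈ range (n+1), tmTc (fun x : ℝ => (2:ℝ) + 2 * Real.cos (2⁻¹ * x)) i
            * tmTc (fun x : ℝ => D (k+1) (2⁻¹ * x)) (n - i)|
          ≤ ∑ i ∈ range (n+1), |tmTc (fun x : ℝ => (2:ℝ) + 2 * Real.cos (2⁻¹ * x)) i
            * tmTc (fun x : ℝ => D (k+1) (2⁻¹ * x)) (n - i)| := Finset.abs_sum_le_sum_abs _ _
      _ ≤ ∑ i ∈ range (n+1), tmW i * (δ * (2⁻¹:ℝ)^n) := by
          refine Finset.sum_le_sum ?_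
          intro i hi
          have hin : i ≤ n := by have := Finset.mem_range.mp hi; omega
          rcases Nat.eq_zero_or_pos i with h0 | h0
          · subst h0
            rw [Nat.sub_zero, hU0, abs_mul, show |(4:ℝ)| = 4 by norm_num,
              show tmW 0 = 4 by simp [tmW]]
            have := hvB_bd n
            linarith
          rcases Nat.lt_or_ge i 2 with h1 | h1
          · have : i = 1 := by omega
            subst this
            rw [hU1, zero_mul, abs_zero, show tmW 1 = 0 by simp [tmW], zero_mul]
          · rw [show tmW i = 9 * (3⁻¹:ℝ)^i by
              simp [tmW, show i ≠ 0 by omega, show i ≠ 1 by omega], abs_mul]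
            calc |tmTc (fun x : ℝ => (2:ℝ) + 2 * Real.cos (2⁻¹ * x)) i|
                * |tmTc (fun x : ℝ => D (k+1) (2⁻¹ * x)) (n - i)|
                ≤ (9 * (3⁻¹:ℝ)^i * (2⁻¹:ℝ)^i) * (δ * (2⁻¹:ℝ)^(n-i)) :=
                  mul_le_mul (hU_bd i h1) (hvB_bd (n-i)) (abs_nonneg _) (by positivity)
            _ = 9 * (3⁻¹:ℝ)^i * (δ * ((2⁻¹:ℝ)^i * (2⁻¹:ℝ)^(n-i))) := by ring
            _ = 9 * (3⁻¹:ℝ)^i * (δ * (2⁻¹:ℝ)^n) := by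
                  rw [← pow_add, Nat.add_sub_cancel' hin]
      _ ≤ 11/2 * (δ * (2⁻¹:ℝ)^n) := by
          rw [← Finset.sum_mul]
          exact mul_le_mul_of_nonneg_right (tm_wsum (n+1) (by omega)) (by positivity)
    have hT2 : |∑ m ∈ range (n+1),
          tmTc (fun x : ℝ => D k (4⁻¹*x) * ((4:ℝ)*Real.cos (4⁻¹*x) + D k (4⁻¹*x))) m
        * tmTc (fun x : ℝ => (-2:ℝ) + (2*Real.cos (2⁻¹*x) + D (k+1) (2⁻¹*x))) (n - m)|
        ≤ 16/3 * (δ * (2⁻¹:ℝ)^n) * (1/2) := by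
      calc |∑ m ∈ range (n+1),
          tmTc (fun x : ℝ => D k (4⁻¹*x) * ((4:ℝ)*Real.cos (4⁻¹*x) + D k (4⁻¹*x))) m
        * tmTc (fun x : ℝ => (-2:ℝ) + (2*Real.cos (2⁻¹*x) + D (k+1) (2⁻¹*x))) (n - m)|
          ≤ ∑ m ∈ range (n+1),
          |tmTc (fun x : ℝ => D k (4⁻¹*x) * ((4:ℝ)*Real.cos (4⁻¹*x) + D k (4⁻¹*x))) m
        * tmTc (fun x : ℝ => (-2:ℝ) + (2*Real.cos (2⁻¹*x) + D (k+1) (2⁻¹*x))) (n - m)| :=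
            Finset.abs_sum_le_sum_abs _ _
      _ ≤ ∑ m ∈ range (n+1), (16/3 * (δ * (2⁻¹:ℝ)^n)) * tmV m := by
          refine Finset.sum_le_sum ?_
          intro m hm
          have hmn : m ≤ n := by have := Finset.mem_range.mp hm; omega
          rcases le_or_gt m 2 with h2 | h2
          · rw [hP0 m h2, zero_mul, abs_zero, show tmV m = 0 by simp [tmV, h2], mul_zero]
          · have h3m : 3 ≤ m := by omega
            rw [show tmV m = ((m:ℝ) - 2) * (2⁻¹:ℝ)^m by
              simp [tmV, show ¬ (m ≤ 2) by omega], abs_mul]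
            have e : (4⁻¹:ℝ)^m * (2⁻¹:ℝ)^(n-m) = (2⁻¹:ℝ)^n * (2⁻¹:ℝ)^m := by
              rw [show (4⁻¹:ℝ) = (2⁻¹:ℝ)^2 by norm_num, ← pow_mul, ← pow_add, ← pow_add]
              congr 1
              omega
            calc |tmTc (fun x : ℝ => D k (4⁻¹*x) * ((4:ℝ)*Real.cos (4⁻¹*x) + D k (4⁻¹*x))) m|
                * |tmTc (fun x : ℝ => (-2:ℝ) + (2*Real.cos (2⁻¹*x) + D (k+1) (2⁻¹*x))) (n - m)|
                ≤ (((m:ℝ) - 2) * (4 * δ * (4⁻¹:ℝ)^m)) * (4/3 * (2⁻¹:ℝ)^(n-m)) := by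
                  refine mul_le_mul (hP_bd m h3m) (hH_bd (n-m)) (abs_nonneg _) ?_
                  have hm2 : (2:ℝ) ≤ (m:ℝ) := by exact_mod_cast (by omega : 2 ≤ m)
                  have h1 : (0:ℝ) ≤ (m:ℝ) - 2 := by linarith
                  have h2 : (0:ℝ) ≤ 4 * δ * (4⁻¹:ℝ)^m := by positivity
                  exact mul_nonneg h1 h2
            _ = (16/3 * δ) * (((m:ℝ) - 2) * ((4⁻¹:ℝ)^m * (2⁻¹:ℝ)^(n-m))) := by ring
            _ = (16/3 * (δ * (2⁻¹:ℝ)^n)) * (((m:ℝ) - 2) * (2⁻¹:ℝ)^m) := by rw [e]; ring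
      _ = (16/3 * (δ * (2⁻¹:ℝ)^n)) * ∑ m ∈ range (n+1), tmV m := by rw [Finset.mul_sum]
      _ ≤ (16/3 * (δ * (2⁻¹:ℝ)^n)) * (1/2) := by
          exact mul_le_mul_of_nonneg_left (tm_vsum (n+1)) (by positivity)
    have hfin : 11/2 * (δ * (2⁻¹:ℝ)^n) + 16/3 * (δ * (2⁻¹:ℝ)^n) * (1/2) ≤ 9 * δ / 2 ^ n := by
      have h : (0:ℝ) ≤ δ * (2⁻¹:ℝ)^n := by positivity
      have e : 9 * δ / 2^n = 9 * (δ * (2⁻¹:ℝ)^n) := by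
        rw [inv_pow]
        ring
      rw [e]
      linarith
    linarith
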